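/- Let r > 0, ω₁ ≠ ω₂ and φ₁, φ₂ ∈ ℝ, and set F(t) = r·e^{i(φ₁−ω₁t)} + r·e^{i(φ₂−ω₂t)} and a(t) = |F(t)|. Then a(t) = 2r·|cos(((ω₂−ω₁)t + φ₁ − φ₂)/2)|, and at every t where F(t) ≠ 0 the Chu–Mei quotient satisfies a''(t)/a(t) = −((ω₁−ω₂)/2)². In particular, at any singular point t̂ (where F(t̂) = 0), the limit of the Chu–Mei quotient as t → t̂ equals −((ω₁−ω₂)/2)², which is finite: for a bichromatic wave the Chu–Mei quotient is bounded at singular points. -/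

import Mathlib

open Real Filter Topology

lemma deriv2_K_cos (K c d : ℝ) :
    deriv (deriv (fun t => K * Real.cos (c * t + d))) =
      fun t => -(c ^ 2) * (K * Real.cos (c * t + d)) := by
  have hlin : ∀ t : ℝ, HasDerivAt (fun t' : ℝ => c * t' + d) c t := by
    intro t
    simpa using ((hasDerivAt_id t).const_mul c).add_const d
  have h1 : deriv (fun t => K * Real.cos (c * t + d)) =
      fun t => (-K * c) * Real.sin (c * t + d) := by
    funext t
    have h := ((Real.hasDerivAt_cos (c * t + d)).comp t (hlin t)).const_mul K
    simp only [Function.comp] at h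
    rw [h.deriv]; ring
  rw [h1]
  funext t
  have h := ((Real.hasDerivAt_sin (c * t + d)).comp t (hlin t)).const_mul (-K * c)
  simp only [Function.comp] at h
  rw [h.deriv]; ring

set_option maxHeartbeats 1000000 in
/-- For a bichromatic signal `F(t) = r e^{i(φ₁−ω₁t)} + r e^{i(φ₂−ω₂t)}`
with equal amplitudes `r > 0` and distinct frequencies, the amplitude is
`a(t) = 2r|cos(((ω₂−ω₁)t + φ₁−φ₂)/2)|`, the Chu–Mei quotient equals the constant
`−((ω₁−ω₂)/2)²` wherever `F ≠ 0`, and at every singular point the Chu–Mei quotient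
has the finite limit `−((ω₁−ω₂)/2)²`. -/
theorem bichromatic_chu_mei_bounded
    (r ω₁ ω₂ φ₁ φ₂ : ℝ) (hr : 0 < r) (hω : ω₁ ≠ ω₂)
    (F : ℝ → ℂ)
    (hF : F = fun t : ℝ => (r : ℂ) * Complex.exp (Complex.I * ((φ₁ : ℂ) - (ω₁ : ℂ) * (t : ℂ))) +
                       (r : ℂ) * Complex.exp (Complex.I * ((φ₂ : ℂ) - (ω₂ : ℂ) * (t : ℂ))))
    (a : ℝ → ℝ) (ha : a = fun t => ‖F t‖) :
    (∀ t, a t = 2 * r * |Real.cos (((ω₂ - ω₁) * t + φ₁ - φ₂) / 2)|) ∧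
    (∀ t, F t ≠ 0 → deriv (deriv a) t / a t = -((ω₁ - ω₂) / 2) ^ 2) ∧
    (∀ t₀, F t₀ = 0 →
      Tendsto (fun t => deriv (deriv a) t / a t) (𝓝[≠] t₀)
        (𝓝 (-((ω₁ - ω₂) / 2) ^ 2))) := by
  set c : ℝ := (ω₂ - ω₁) / 2 with hcdef
  set d : ℝ := (φ₁ - φ₂) / 2 with hddef
  have hc0 : c ≠ 0 := by
    simp only [hcdef]
    intro h
    apply hω
    linarith [(div_eq_zero_iff.mp h).resolve_right (by norm_num)]
  have hg : ∀ t : ℝ, ((ω₂ - ω₁) * t + φ₁ - φ₂) / 2 = c * t + d := by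
    intro t; simp only [hcdef, hddef]; ring
  -- key factorization
  have key : ∀ t : ℝ, F t =
      ((2 * r * Real.cos (c * t + d) : ℝ) : ℂ) *
        Complex.exp ((((φ₁ + φ₂) - (ω₁ + ω₂) * t) / 2 : ℝ) * Complex.I) := by
    intro t
    rw [hF]
    have h2c : ((2 * r * Real.cos (c * t + d) : ℝ) : ℂ) =
        (r : ℂ) * (Complex.exp ((c * t + d : ℝ) * Complex.I) +
          Complex.exp (-((c * t + d : ℝ) : ℂ) * Complex.I)) := by
      push_cast [Complex.ofReal_cos]
      linear_combination (r : ℂ) * Complex.two_cos ((c : ℂ) * t + (d : ℂ))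
    rw [h2c]
    simp only [hcdef, hddef]
    push_cast
    rw [show Complex.I * ((φ₁ : ℂ) - (ω₁ : ℂ) * t) =
      (((ω₂ : ℂ) - ω₁) / 2 * t + ((φ₁ : ℂ) - φ₂) / 2) * Complex.I +
        ((((φ₁ : ℂ) + φ₂) - ((ω₁ : ℂ) + ω₂) * t) / 2) * Complex.I from by ring,
      show Complex.I * ((φ₂ : ℂ) - (ω₂ : ℂ) * t) =
      -((((ω₂ : ℂ) - ω₁) / 2 * t + ((φ₁ : ℂ) - φ₂) / 2)) * Complex.I +
        ((((φ₁ : ℂ) + φ₂) - ((ω₁ : ℂ) + ω₂) * t) / 2) * Complex.I from by ring,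
      Complex.exp_add, Complex.exp_add]
    ring
  have hamp : ∀ t : ℝ, a t = 2 * r * |Real.cos (c * t + d)| := by
    intro t
    rw [ha]
    simp only [key t, norm_mul, Complex.norm_exp_ofReal_mul_I,
      Complex.norm_real, Real.norm_eq_abs, mul_one]
    rw [abs_two, abs_of_pos hr]
  have hFzero : ∀ t : ℝ, F t = 0 ↔ Real.cos (c * t + d) = 0 := by
    intro t
    rw [key t]
    constructor
    · intro h
      rcases mul_eq_zero.mp h with h | h
      · have := Complex.ofReal_eq_zero.mp h
        rcases mul_eq_zero.mp this with h' | h'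
        · exact absurd h' (by positivity)
        · exact h'
      · exact absurd h (Complex.exp_ne_zero _)
    · intro h; simp [h]
  -- second part: pointwise value of the Chu–Mei quotient
  have part2 : ∀ t, F t ≠ 0 → deriv (deriv a) t / a t = -((ω₁ - ω₂) / 2) ^ 2 := by
    intro t hFt
    have hcos : Real.cos (c * t + d) ≠ 0 := fun h => hFt ((hFzero t).mpr h)
    -- choose sign
    obtain ⟨K, hKa⟩ : ∃ K : ℝ, ∀ᶠ t' in 𝓝 t, a t' = K * Real.cos (c * t' + d) := by
      have hcont : Continuous fun t' : ℝ => Real.cos (c * t' + d) := by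
        continuity
      rcases hcos.lt_or_gt with hneg | hpos
      · refine ⟨-(2 * r), ?_⟩
        have : ∀ᶠ t' in 𝓝 t, Real.cos (c * t' + d) < 0 :=
          (hcont.continuousAt).eventually_lt continuousAt_const hneg
        filter_upwards [this] with t' ht'
        rw [hamp t', abs_of_neg ht']; ring
      · refine ⟨2 * r, ?_⟩
        have : ∀ᶠ t' in 𝓝 t, 0 < Real.cos (c * t' + d) :=
          (continuousAt_const).eventually_lt hcont.continuousAt hpos
        filter_upwards [this] with t' ht'
        rw [hamp t', abs_of_pos ht']
    have heq : a =ᶠ[𝓝 t] fun t' => K * Real.cos (c * t' + d) := hKa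
    have h2 : deriv (deriv a) t =
        -(c ^ 2) * (K * Real.cos (c * t + d)) := by
      have := (heq.deriv).deriv
      rw [this.self_of_nhds, deriv2_K_cos]
    have hat : a t = K * Real.cos (c * t + d) := heq.self_of_nhds
    have hat0 : a t ≠ 0 := by
      rw [hamp t]
      positivity
    rw [h2, ← hat, mul_div_assoc, div_self hat0, mul_one]
    rw [hcdef]; ring
  refine ⟨fun t => by rw [hamp t, hg t], part2, ?_⟩
  -- third part: limit at singular points
  intro t₀ h0
  have hcos0 : Real.cos (c * t₀ + d) = 0 := (hFzero t₀).mp h0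
  have hev : ∀ᶠ t in 𝓝[≠] t₀, deriv (deriv a) t / a t = -((ω₁ - ω₂) / 2) ^ 2 := by
    have hball : Metric.ball t₀ (Real.pi / |c|) ∈ 𝓝 t₀ :=
      Metric.ball_mem_nhds _ (by positivity)
    rw [eventually_nhdsWithin_iff]
    filter_upwards [hball] with t ht htne
    apply part2
    rw [Ne, hFzero t]
    intro hcost
    obtain ⟨n, hn⟩ := Real.cos_eq_zero_iff.mp hcost
    obtain ⟨m, hm⟩ := Real.cos_eq_zero_iff.mp hcos0
    have hdiff : c * (t - t₀) = (n - m) * Real.pi := by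
      push_cast
      linear_combination hn - hm
    have hnm : n ≠ m := by
      intro h
      apply htne
      have : c * (t - t₀) = 0 := by rw [hdiff, h]; simp
      have := (mul_eq_zero.mp this).resolve_left hc0
      simp only [Set.mem_singleton_iff]
      linarith
    have h1le : (1 : ℝ) ≤ |(n : ℝ) - m| := by
      have : (1 : ℤ) ≤ |n - m| := Int.one_le_abs (sub_ne_zero.mpr hnm)
      calc (1:ℝ) ≤ ((|n - m| : ℤ) : ℝ) := by exact_mod_cast this
        _ = |(n:ℝ) - m| := by push_cast [Int.cast_abs]; ring_nf
    have hdist : |t - t₀| < Real.pi / |c| := by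
      simpa [Real.dist_eq] using ht
    have : |c| * |t - t₀| = |(n:ℝ) - m| * Real.pi := by
      rw [← abs_mul, hdiff, abs_mul, abs_of_pos Real.pi_pos]
    have hlt : |c| * |t - t₀| < Real.pi := by
      rw [lt_div_iff₀ (abs_pos.mpr hc0)] at hdist
      linarith [hdist]
    rw [this] at hlt
    have := mul_le_mul_of_nonneg_right h1le Real.pi_pos.le
    linarith
  exact Filter.Tendsto.congr' (by filter_upwards [hev] with t ht using ht.symm) tendsto_const_nhds
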